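/- arXiv:2604.14752 — 5 statements merged into one kernel-verified Lean document; each statement's English description precedes it below -/
import Mathlib

section
/- Fix λ > 0 and ε > 0 with 1 − 4λε² < 0, and let f solve ε² f'' + f' + λ f = 0 with f(0) = 0 and ε f'(0) = 1. Then f(t) = e^{−t/(2ε²)} (2ε/√(4λε²−1)) sin(√(4λε²−1) t/(2ε²)), and there exists a universal constant C (independent of λ, ε, t) such that |f(t)| ≤ C λ^{−1/2} e^{−t/(4ε²)} for all t ≥ 0. -/
/-- Harmonic oscillator representation: if `u'' = -ω² u` then
`u t = u 0 * cos (ω t) + (v 0 / ω) * sin (ω t)`. -/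
lemma stmt8_harmonic (ω : ℝ) (hω : ω ≠ 0) (u v : ℝ → ℝ)
    (hu : ∀ t, HasDerivAt u (v t) t)
    (hv : ∀ t, HasDerivAt v (-(ω ^ 2) * u t) t) :
    ∀ t, u t = u 0 * Real.cos (ω * t) + (v 0 / ω) * Real.sin (ω * t) := by
  set P : ℝ → ℝ := fun t => u t * Real.cos (ω * t) - (v t / ω) * Real.sin (ω * t) with hP
  set Q : ℝ → ℝ := fun t => u t * Real.sin (ω * t) + (v t / ω) * Real.cos (ω * t) with hQ
  have hlin : ∀ t : ℝ, HasDerivAt (fun y : ℝ => ω * y) ω t := by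
    intro t; simpa using (hasDerivAt_id t).const_mul ω
  have hc : ∀ t : ℝ, HasDerivAt (fun t => Real.cos (ω * t)) (-Real.sin (ω * t) * ω) t := by
    intro t
    exact (Real.hasDerivAt_cos (ω * t)).comp t (hlin t)
  have hs : ∀ t : ℝ, HasDerivAt (fun t => Real.sin (ω * t)) (Real.cos (ω * t) * ω) t := by
    intro t
    exact (Real.hasDerivAt_sin (ω * t)).comp t (hlin t)
  have hP' : ∀ t, HasDerivAt P 0 t := by
    intro t
    have := ((hu t).mul (hc t)).sub (((hv t).div_const ω).mul (hs t))
    refine this.congr_deriv ?_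
    field_simp
    ring
  have hQ' : ∀ t, HasDerivAt Q 0 t := by
    intro t
    have := ((hu t).mul (hs t)).add (((hv t).div_const ω).mul (hc t))
    refine this.congr_deriv ?_
    field_simp
    ring
  have hPc : ∀ t, P t = P 0 :=
    fun t => is_const_of_deriv_eq_zero (fun x => (hP' x).differentiableAt)
      (fun x => (hP' x).deriv) t 0
  have hQc : ∀ t, Q t = Q 0 :=
    fun t => is_const_of_deriv_eq_zero (fun x => (hQ' x).differentiableAt)
      (fun x => (hQ' x).deriv) t 0
  intro t
  have h1 : u t = P t * Real.cos (ω * t) + Q t * Real.sin (ω * t) := by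
    have hsc := Real.sin_sq_add_cos_sq (ω * t)
    simp only [hP, hQ]
    linear_combination (-(u t)) * hsc
  rw [h1, hPc t, hQc t]
  simp [hP, hQ]

set_option maxHeartbeats 1000000 in
theorem stmt8 :
    ∃ C : ℝ, 0 < C ∧ ∀ (lam ε : ℝ) (f f' f'' : ℝ → ℝ),
      0 < lam → 0 < ε → 1 - 4 * lam * ε ^ 2 < 0 →
      (∀ t, HasDerivAt f (f' t) t) → (∀ t, HasDerivAt f' (f'' t) t) →
      (∀ t, ε ^ 2 * f'' t + f' t + lam * f t = 0) →
      f 0 = 0 → ε * f' 0 = 1 →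
      (∀ t, 0 ≤ t →
        f t = Real.exp (-(t / (2 * ε ^ 2))) * (2 * ε / Real.sqrt (4 * lam * ε ^ 2 - 1)) *
          Real.sin (Real.sqrt (4 * lam * ε ^ 2 - 1) * t / (2 * ε ^ 2)))
      ∧ (∀ t, 0 ≤ t →
        |f t| ≤ C * lam ^ (-(1 : ℝ) / 2) * Real.exp (-(t / (4 * ε ^ 2)))) := by
  refine ⟨4, by norm_num, ?_⟩
  intro lam ε f f' f'' hlam hε hunder hf hf' hode hf0 hf'0
  have hε2 : (0:ℝ) < ε ^ 2 := by positivity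
  have hεne : ε ≠ 0 := ne_of_gt hε
  set D : ℝ := 4 * lam * ε ^ 2 - 1 with hD
  have hDpos : 0 < D := by simp only [hD]; linarith
  have hsD : 0 < Real.sqrt D := Real.sqrt_pos.mpr hDpos
  have hsDne : Real.sqrt D ≠ 0 := ne_of_gt hsD
  set ω : ℝ := Real.sqrt D / (2 * ε ^ 2) with hωdef
  have hωpos : 0 < ω := by positivity
  have hωne : ω ≠ 0 := ne_of_gt hωpos
  have hω2 : ω ^ 2 = D / (4 * ε ^ 4) := by
    rw [hωdef, div_pow, Real.sq_sqrt hDpos.le]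
    ring_nf
  set b : ℝ := 1 / (2 * ε ^ 2) with hb
  set u : ℝ → ℝ := fun t => Real.exp (b * t) * f t with hu_def
  set v : ℝ → ℝ := fun t => Real.exp (b * t) * (b * f t + f' t) with hv_def
  have hlin : ∀ t : ℝ, HasDerivAt (fun y : ℝ => b * y) b t := by
    intro t; simpa using (hasDerivAt_id t).const_mul b
  have hE : ∀ t : ℝ, HasDerivAt (fun t => Real.exp (b * t)) (Real.exp (b * t) * b) t := by
    intro t
    exact (Real.hasDerivAt_exp (b * t)).comp t (hlin t)
  have hu : ∀ t, HasDerivAt u (v t) t := by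
    intro t
    have := (hE t).mul (hf t)
    refine this.congr_deriv ?_
    simp only [hv_def]
    ring
  have hv : ∀ t, HasDerivAt v (-(ω ^ 2) * u t) t := by
    intro t
    have := (hE t).mul (((hf t).const_mul b).add (hf' t))
    refine this.congr_deriv ?_
    have hodet := hode t
    have hf''eq : f'' t = -(f' t + lam * f t) / ε ^ 2 := by
      field_simp
      linarith
    simp only [hu_def, hω2, hb, hf''eq, Pi.add_apply, hD]
    field_simp
    ring
  have hrep := stmt8_harmonic ω hωne u v hu hv
  have hu0 : u 0 = 0 := by simp [hu_def, hf0]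
  have hv0 : v 0 = 1 / ε := by
    have : f' 0 = 1 / ε := by field_simp at hf'0 ⊢; linarith
    simp [hv_def, hf0, this]
  have hfeq : ∀ t : ℝ, f t =
      Real.exp (-(t / (2 * ε ^ 2))) * (2 * ε / Real.sqrt D) *
        Real.sin (Real.sqrt D * t / (2 * ε ^ 2)) := by
    intro t
    have h1 := hrep t
    rw [hu0, hv0] at h1
    have h2 : u t = Real.exp (b * t) * f t := rfl
    have hexpne : Real.exp (b * t) ≠ 0 := (Real.exp_pos _).ne'
    have hft : f t = (Real.exp (b * t))⁻¹ * ((1 / ε / ω) * Real.sin (ω * t)) := by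
      rw [h2] at h1
      rw [eq_inv_mul_iff_mul_eq₀ hexpne]
      linarith [h1]
    have harg : ω * t = Real.sqrt D * t / (2 * ε ^ 2) := by
      rw [hωdef]; ring
    have hcoef : 1 / ε / ω = 2 * ε / Real.sqrt D := by
      rw [hωdef]; field_simp
    have hexp : (Real.exp (b * t))⁻¹ = Real.exp (-(t / (2 * ε ^ 2))) := by
      rw [← Real.exp_neg]; congr 1; rw [hb]; ring
    rw [hft, hexp, harg, hcoef]
    ring
  constructor
  · intro t _; exact hfeq t
  · intro t ht
    rw [hfeq t]
    have hlam12 : lam ^ (-(1:ℝ) / 2) = (Real.sqrt lam)⁻¹ := by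
      rw [Real.sqrt_eq_rpow, ← Real.rpow_neg hlam.le]
      norm_num
    have hslam : 0 < Real.sqrt lam := Real.sqrt_pos.mpr hlam
    have hE2 : Real.exp (-(t / (2 * ε ^ 2))) =
        Real.exp (-(t / (4 * ε ^ 2))) * Real.exp (-(t / (4 * ε ^ 2))) := by
      rw [← Real.exp_add]; congr 1; ring
    have habs : |Real.exp (-(t / (2 * ε ^ 2))) * (2 * ε / Real.sqrt D) *
        Real.sin (Real.sqrt D * t / (2 * ε ^ 2))| =
        Real.exp (-(t / (2 * ε ^ 2))) * (2 * ε / Real.sqrt D) *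
          |Real.sin (Real.sqrt D * t / (2 * ε ^ 2))| := by
      rw [abs_mul, abs_mul]
      congr 2
      · exact abs_of_pos (Real.exp_pos _)
      · exact abs_of_pos (by positivity)
    rw [habs, hlam12]
    have hEpos : 0 < Real.exp (-(t / (4 * ε ^ 2))) := Real.exp_pos _
    rcases le_or_gt (4 * lam * ε ^ 2) 2 with hcase | hcase
    · -- small D: use |sin x| ≤ |x|
      have hsin : |Real.sin (Real.sqrt D * t / (2 * ε ^ 2))| ≤
          Real.sqrt D * t / (2 * ε ^ 2) := by
        calc |Real.sin (Real.sqrt D * t / (2 * ε ^ 2))| ≤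
            |Real.sqrt D * t / (2 * ε ^ 2)| := Real.abs_sin_le_abs
          _ = Real.sqrt D * t / (2 * ε ^ 2) := abs_of_nonneg (by positivity)
      have step1 : Real.exp (-(t / (2 * ε ^ 2))) * (2 * ε / Real.sqrt D) *
          |Real.sin (Real.sqrt D * t / (2 * ε ^ 2))| ≤
          Real.exp (-(t / (2 * ε ^ 2))) * (t / ε) := by
        have : (2 * ε / Real.sqrt D) * (Real.sqrt D * t / (2 * ε ^ 2)) = t / ε := by
          field_simp
        calc Real.exp (-(t / (2 * ε ^ 2))) * (2 * ε / Real.sqrt D) *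
              |Real.sin (Real.sqrt D * t / (2 * ε ^ 2))| ≤
            Real.exp (-(t / (2 * ε ^ 2))) * (2 * ε / Real.sqrt D) *
              (Real.sqrt D * t / (2 * ε ^ 2)) := by
              apply mul_le_mul_of_nonneg_left hsin (by positivity)
          _ = Real.exp (-(t / (2 * ε ^ 2))) * (t / ε) := by rw [mul_assoc, this]
      refine step1.trans ?_
      -- √lam ≤ 1/(√2 ε); x e^{-x} ≤ 1 with x = t/(4ε²)
      have hxexp : t / (4 * ε ^ 2) * Real.exp (-(t / (4 * ε ^ 2))) ≤ 1 := by
        set x := t / (4 * ε ^ 2) with hx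
        have := Real.add_one_le_exp x
        have hp := Real.exp_pos x
        rw [Real.exp_neg, ← div_eq_mul_inv, div_le_one hp]
        linarith
      have hslam' : Real.sqrt lam ≤ 1 / ε := by
        rw [show (1:ℝ)/ε = Real.sqrt ((1/ε)^2) by
          rw [Real.sqrt_sq (by positivity)]]
        apply Real.sqrt_le_sqrt
        rw [div_pow, one_pow]
        rw [le_div_iff₀ hε2]
        nlinarith
      -- goal: exp(-(t/2ε²)) * (t/ε) ≤ 4 * (√lam)⁻¹ * exp(-(t/4ε²))
      rw [hE2]
      have key : Real.exp (-(t / (4 * ε ^ 2))) * (t / ε) ≤ 4 * (Real.sqrt lam)⁻¹ := by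
        have h1 : t / ε = 4 * ε * (t / (4 * ε ^ 2)) := by field_simp
        rw [h1]
        have h2 : Real.exp (-(t / (4 * ε ^ 2))) * (4 * ε * (t / (4 * ε ^ 2))) =
            4 * ε * (t / (4 * ε ^ 2) * Real.exp (-(t / (4 * ε ^ 2)))) := by ring
        rw [h2]
        have h3 : 4 * ε * (t / (4 * ε ^ 2) * Real.exp (-(t / (4 * ε ^ 2)))) ≤ 4 * ε * 1 := by
          apply mul_le_mul_of_nonneg_left hxexp (by positivity)
        refine h3.trans ?_
        rw [mul_one]
        -- 4 ε ≤ 4 / √lam  ⟸  √lam ≤ 1/ε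
        rw [show 4 * (Real.sqrt lam)⁻¹ = 4 * (1 / Real.sqrt lam) by rw [one_div]]
        have : ε ≤ 1 / Real.sqrt lam := by
          rw [le_div_iff₀ hslam]
          have := mul_le_mul_of_nonneg_left hslam' hε.le
          calc ε * Real.sqrt lam ≤ ε * (1 / ε) := this
            _ = 1 := by field_simp
        linarith
      calc Real.exp (-(t / (4 * ε ^ 2))) * Real.exp (-(t / (4 * ε ^ 2))) * (t / ε) =
          (Real.exp (-(t / (4 * ε ^ 2))) * (t / ε)) * Real.exp (-(t / (4 * ε ^ 2))) := by ring
        _ ≤ (4 * (Real.sqrt lam)⁻¹) * Real.exp (-(t / (4 * ε ^ 2))) := by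
            apply mul_le_mul_of_nonneg_right key hEpos.le
        _ = 4 * (Real.sqrt lam)⁻¹ * Real.exp (-(t / (4 * ε ^ 2))) := by ring
    ·
      have hsin : |Real.sin (Real.sqrt D * t / (2 * ε ^ 2))| ≤ 1 :=
        abs_le.mpr ⟨Real.neg_one_le_sin _, Real.sin_le_one _⟩
      have hcoef : 2 * ε / Real.sqrt D ≤ 2 * (Real.sqrt lam)⁻¹ := by
        -- D ≥ 2 lam ε², so √D ≥ √2 √lam ε ≥ √lam ε, so 2ε/√D ≤ 2/√lam
        have hD2 : lam * ε ^ 2 ≤ D := by simp only [hD]; nlinarith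
        have h1 : Real.sqrt (lam * ε ^ 2) ≤ Real.sqrt D := Real.sqrt_le_sqrt hD2
        have h2 : Real.sqrt (lam * ε ^ 2) = Real.sqrt lam * ε := by
          rw [Real.sqrt_mul hlam.le, Real.sqrt_sq hε.le]
        rw [h2] at h1
        rw [div_le_iff₀ hsD]
        have h3 : 2 * (Real.sqrt lam)⁻¹ * (Real.sqrt lam * ε) ≤
            2 * (Real.sqrt lam)⁻¹ * Real.sqrt D := by
          apply mul_le_mul_of_nonneg_left h1 (by positivity)
        calc 2 * ε = 2 * (Real.sqrt lam)⁻¹ * (Real.sqrt lam * ε) := by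
              field_simp
          _ ≤ 2 * (Real.sqrt lam)⁻¹ * Real.sqrt D := h3
      have hEle : Real.exp (-(t / (2 * ε ^ 2))) ≤ Real.exp (-(t / (4 * ε ^ 2))) := by
        apply Real.exp_le_exp.mpr
        have h4 : (0:ℝ) < 2 * ε ^ 2 := by positivity
        have h5 : 2 * ε ^ 2 ≤ 4 * ε ^ 2 := by nlinarith [sq_nonneg ε]
        have h6 : t / (4 * ε ^ 2) ≤ t / (2 * ε ^ 2) :=
          div_le_div_of_nonneg_left ht h4 h5
        linarith
      calc Real.exp (-(t / (2 * ε ^ 2))) * (2 * ε / Real.sqrt D) *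
            |Real.sin (Real.sqrt D * t / (2 * ε ^ 2))| ≤
          Real.exp (-(t / (2 * ε ^ 2))) * (2 * ε / Real.sqrt D) * 1 := by
            apply mul_le_mul_of_nonneg_left hsin (by positivity)
        _ = (2 * ε / Real.sqrt D) * Real.exp (-(t / (2 * ε ^ 2))) := by ring
        _ ≤ (2 * (Real.sqrt lam)⁻¹) * Real.exp (-(t / (4 * ε ^ 2))) := by
            apply mul_le_mul hcoef hEle (Real.exp_pos _).le (by positivity)
        _ = 2 * ((Real.sqrt lam)⁻¹ * Real.exp (-(t / (4 * ε ^ 2)))) := by ring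
        _ ≤ 4 * ((Real.sqrt lam)⁻¹ * Real.exp (-(t / (4 * ε ^ 2)))) := by
            have h0 : (0:ℝ) ≤ (Real.sqrt lam)⁻¹ * Real.exp (-(t / (4 * ε ^ 2))) := by positivity
            linarith
        _ = 4 * (Real.sqrt lam)⁻¹ * Real.exp (-(t / (4 * ε ^ 2))) := by ring
end

section
/- Fix λ > 0 and ε > 0 with 1 − 4λε² ≥ 0, and let f solve ε² f'' + f' + λ f = 0 with f(0) = 0 and ε f'(0) = 1. Then |f(t)| ≤ 4 ε e^{−λ t} for all t ≥ 0. -/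
set_option maxHeartbeats 1600000 in
theorem stmt10 (lam ε : ℝ) (hlam : 0 < lam) (hε : 0 < ε)
    (hreg : 0 ≤ 1 - 4 * lam * ε ^ 2)
    (f f' f'' : ℝ → ℝ)
    (hf : ∀ t, HasDerivAt f (f' t) t) (hf' : ∀ t, HasDerivAt f' (f'' t) t)
    (hode : ∀ t, ε ^ 2 * f'' t + f' t + lam * f t = 0)
    (h0 : f 0 = 0) (h0' : ε * f' 0 = 1) :
    ∀ t, 0 ≤ t → |f t| ≤ 4 * ε * Real.exp (-(lam * t)) := by
  intro t ht
  have hεne : ε ≠ 0 := ne_of_gt hε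
  have hf'0 : f' 0 = 1 / ε := by field_simp; linarith [h0']
  set a : ℝ := 1 - 2 * lam * ε ^ 2 with ha
  have ha2 : (1:ℝ)/2 ≤ a := by nlinarith
  set w : ℝ → ℝ := fun s => Real.exp (lam * s) * f s with hw
  set w1 : ℝ → ℝ := fun s => Real.exp (lam * s) * (lam * f s + f' s) with hw1
  set w2 : ℝ → ℝ := fun s =>
    Real.exp (lam * s) * (lam ^ 2 * f s + 2 * lam * f' s + f'' s) with hw2
  have hexp : ∀ s : ℝ, HasDerivAt (fun x => Real.exp (lam * x))
      (lam * Real.exp (lam * s)) s := by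
    intro s
    exact ((Real.hasDerivAt_exp (lam * s)).comp s ((hasDerivAt_id s).const_mul lam)).congr_deriv (by ring)
  have hdw : ∀ s, HasDerivAt w (w1 s) s := by
    intro s
    have := (hexp s).mul (hf s)
    refine HasDerivAt.congr_deriv this (Eq.symm ?_)
    simp [hw1]; ring
  have hdw1 : ∀ s, HasDerivAt w1 (w2 s) s := by
    intro s
    have hin : HasDerivAt (fun x => lam * f x + f' x) (lam * f' s + f'' s) s :=
      ((hf s).const_mul lam).add (hf' s)
    have := (hexp s).mul hin
    refine HasDerivAt.congr_deriv this (Eq.symm ?_)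
    simp [hw2]; ring
  have hweq : ∀ s, ε ^ 2 * w2 s + a * w1 s + ε ^ 2 * lam ^ 2 * w s = 0 := by
    intro s
    have h := hode s
    simp only [hw, hw1, hw2, ha]
    nlinarith [Real.exp_pos (lam * s), h]
  -- Energy E
  set E : ℝ → ℝ := fun s => ε ^ 2 * (w1 s) ^ 2 + ε ^ 2 * lam ^ 2 * (w s) ^ 2 with hE
  have hdE : ∀ s, HasDerivAt E (-2 * a * (w1 s) ^ 2) s := by
    intro s
    have h1 : HasDerivAt (fun x => ε ^ 2 * (w1 x) ^ 2)
        (ε ^ 2 * (2 * w1 s * w2 s)) s := by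
      have := ((hdw1 s).pow 2).const_mul (ε ^ 2)
      refine HasDerivAt.congr_deriv this (Eq.symm ?_)
      ring
    have h2 : HasDerivAt (fun x => ε ^ 2 * lam ^ 2 * (w x) ^ 2)
        (ε ^ 2 * lam ^ 2 * (2 * w s * w1 s)) s := by
      have := ((hdw s).pow 2).const_mul (ε ^ 2 * lam ^ 2)
      refine HasDerivAt.congr_deriv this (Eq.symm ?_)
      ring
    have := h1.add h2
    refine HasDerivAt.congr_deriv this (Eq.symm ?_)
    have heq := hweq s
    linear_combination (-2 * w1 s) * heq
  have hEanti : AntitoneOn E (Set.Ici 0) := by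
    apply antitoneOn_of_deriv_nonpos (convex_Ici 0)
    · exact fun x _ => ((hdE x).differentiableAt).continuousAt.continuousWithinAt
    · intro x hx
      exact ((hdE x).differentiableAt).differentiableWithinAt
    · intro x hx
      rw [(hdE x).deriv]
      have h := mul_nonneg (by linarith : (0:ℝ) ≤ a) (sq_nonneg (w1 x))
      nlinarith [h]
  have hE0 : E 0 = 1 := by
    simp only [hE, hw, hw1]
    simp [h0, hf'0]
    field_simp
  have hEt : E t ≤ 1 := by
    have := hEanti (Set.self_mem_Ici) (Set.mem_Ici.2 ht) ht
    rwa [hE0] at this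
  have hA : (ε * w1 t) ^ 2 ≤ 1 := by
    have h2 : 0 ≤ ε ^ 2 * lam ^ 2 * (w t) ^ 2 := by positivity
    have : ε ^ 2 * (w1 t) ^ 2 ≤ 1 := by
      have := hEt; simp only [hE] at this; linarith
    nlinarith
  -- Energy H
  set u : ℝ → ℝ := fun s => ε ^ 2 * w1 s + a * w s with hu
  set H : ℝ → ℝ := fun s => (u s) ^ 2 + ε ^ 4 * lam ^ 2 * (w s) ^ 2 with hH
  have hdu : ∀ s, HasDerivAt u (-(ε ^ 2 * lam ^ 2) * w s) s := by
    intro s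
    have := ((hdw1 s).const_mul (ε ^ 2)).add ((hdw s).const_mul a)
    refine HasDerivAt.congr_deriv this (Eq.symm ?_)
    have heq := hweq s
    linarith
  have hdH : ∀ s, HasDerivAt H (-2 * a * ε ^ 2 * lam ^ 2 * (w s) ^ 2) s := by
    intro s
    have h1 : HasDerivAt (fun x => (u x) ^ 2)
        (2 * u s * (-(ε ^ 2 * lam ^ 2) * w s)) s := by
      have := (hdu s).pow 2
      refine HasDerivAt.congr_deriv this (Eq.symm ?_)
      ring
    have h2 : HasDerivAt (fun x => ε ^ 4 * lam ^ 2 * (w x) ^ 2)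
        (ε ^ 4 * lam ^ 2 * (2 * w s * w1 s)) s := by
      have := ((hdw s).pow 2).const_mul (ε ^ 4 * lam ^ 2)
      refine HasDerivAt.congr_deriv this (Eq.symm ?_)
      ring
    have := h1.add h2
    refine HasDerivAt.congr_deriv this (Eq.symm ?_)
    simp only [hu]
    ring
  have hHanti : AntitoneOn H (Set.Ici 0) := by
    apply antitoneOn_of_deriv_nonpos (convex_Ici 0)
    · exact fun x _ => ((hdH x).differentiableAt).continuousAt.continuousWithinAt
    · intro x hx
      exact ((hdH x).differentiableAt).differentiableWithinAt
    · intro x hx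
      rw [(hdH x).deriv]
      have h := mul_nonneg (by linarith : (0:ℝ) ≤ a)
        (by positivity : (0:ℝ) ≤ ε ^ 2 * lam ^ 2 * w x ^ 2)
      nlinarith [h]
  have hH0 : H 0 = ε ^ 2 := by
    simp only [hH, hu, hw, hw1]
    simp [h0, hf'0]
    field_simp
  have hHt : H t ≤ ε ^ 2 := by
    have := hHanti (Set.self_mem_Ici) (Set.mem_Ici.2 ht) ht
    rwa [hH0] at this
  have hB : (ε ^ 2 * w1 t + a * w t) ^ 2 ≤ ε ^ 2 := by
    have h2 : 0 ≤ ε ^ 4 * lam ^ 2 * (w t) ^ 2 := by positivity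
    have := hHt; simp only [hH, hu] at this; linarith
  -- conclude |w t| ≤ 4 ε
  clear_value a w w1 w2 E u H
  have hA2 : ε ^ 2 * (ε * w1 t) ^ 2 ≤ ε ^ 2 := by
    nlinarith [hA, sq_nonneg ε]
  have haw : (a * w t) ^ 2 ≤ 4 * ε ^ 2 := by
    nlinarith [hB, hA2, sq_nonneg (ε ^ 2 * w1 t + a * w t + ε * (ε * w1 t))]
  have hwsq : (w t) ^ 2 ≤ 16 * ε ^ 2 := by
    nlinarith [haw,
      mul_nonneg (mul_nonneg (by linarith : (0:ℝ) ≤ a - 1/2)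
        (by linarith : (0:ℝ) ≤ a + 1/2)) (sq_nonneg (w t))]
  have hwabs : |w t| ≤ 4 * ε := by
    have h1 : Real.sqrt ((w t) ^ 2) ≤ Real.sqrt ((4 * ε) ^ 2) :=
      Real.sqrt_le_sqrt (by nlinarith [hwsq])
    rwa [Real.sqrt_sq_eq_abs, Real.sqrt_sq (by positivity)] at h1
  have hft : f t = Real.exp (-(lam * t)) * w t := by
    have : Real.exp (-(lam * t)) * (Real.exp (lam * t) * f t) = f t := by
      rw [← mul_assoc, ← Real.exp_add]; simp
    simp only [hw]
    linarith [this]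
  rw [hft, abs_mul, abs_of_pos (Real.exp_pos _)]
  calc Real.exp (-(lam * t)) * |w t| ≤ Real.exp (-(lam * t)) * (4 * ε) := by
        exact mul_le_mul_of_nonneg_left hwabs (Real.exp_pos _).le
    _ = 4 * ε * Real.exp (-(lam * t)) := by ring
end

section
/- Fix λ > 0 and ε > 0 with 1 − 4λε² ≥ 0, and let f solve ε² f'' + f' + λ f = 0 with f(0) = 1 and f'(0) = 0. Then |f(t)| ≤ √2 e^{−λ t} for all t ≥ 0. -/
theorem stmt11 (lam ε : ℝ) (hlam : 0 < lam) (hε : 0 < ε)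
    (hreg : 0 ≤ 1 - 4 * lam * ε ^ 2)
    (f f' f'' : ℝ → ℝ)
    (hf : ∀ t, HasDerivAt f (f' t) t) (hf' : ∀ t, HasDerivAt f' (f'' t) t)
    (hode : ∀ t, ε ^ 2 * f'' t + f' t + lam * f t = 0)
    (h0 : f 0 = 1) (h0' : f' 0 = 0) :
    ∀ t, 0 ≤ t → |f t| ≤ Real.sqrt 2 * Real.exp (-(lam * t)) := by
  set w : ℝ → ℝ := fun s => Real.exp (lam * s) * f s with hw
  set v : ℝ → ℝ := fun s => Real.exp (lam * s) * (f' s + lam * f s) with hv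
  set E : ℝ → ℝ := fun s => ε ^ 2 * (v s) ^ 2 + ε ^ 2 * lam ^ 2 * (w s) ^ 2 with hE
  have hexp : ∀ s : ℝ, HasDerivAt (fun s => Real.exp (lam * s)) (lam * Real.exp (lam * s)) s := by
    intro s
    have := (Real.hasDerivAt_exp (lam * s)).comp s ((hasDerivAt_id s).const_mul lam)
    simpa [mul_comm, Function.comp_def] using this
  have hwd : ∀ s, HasDerivAt w (v s) s := by
    intro s
    have := (hexp s).mul (hf s)
    refine this.congr_deriv (Eq.symm ?_)
    simp only [hv]
    ring
  have hvd : ∀ s, HasDerivAt v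
      (lam * Real.exp (lam * s) * (f' s + lam * f s)
        + Real.exp (lam * s) * (f'' s + lam * f' s)) s := by
    intro s
    exact (hexp s).mul ((hf' s).add ((hf s).const_mul lam))
  have hEd : ∀ s, HasDerivAt E (2 * (2 * ε ^ 2 * lam - 1) * (v s) ^ 2) s := by
    intro s
    have h1 := (((hvd s).pow 2).const_mul (ε ^ 2)).add
      (((hwd s).pow 2).const_mul (ε ^ 2 * lam ^ 2))
    refine h1.congr_deriv (Eq.symm ?_)
    have hodes := hode s
    have hes : ε ^ 2 * f'' s = - f' s - lam * f s := by linarith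
    simp only [hv, hw]
    linear_combination (-2 * Real.exp (lam * s) ^ 2 * (f' s + lam * f s)) * hes
  have hmono : AntitoneOn E (Set.Ici (0:ℝ)) := by
    apply antitoneOn_of_deriv_nonpos (convex_Ici 0)
    · exact fun s _ => (hEd s).differentiableAt.continuousAt.continuousWithinAt
    · intro s hs
      exact (hEd s).differentiableAt.differentiableWithinAt
    · intro s hs
      rw [(hEd s).deriv]
      have h2 : 2 * ε ^ 2 * lam - 1 ≤ 0 := by nlinarith
      nlinarith [sq_nonneg (v s)]
  intro t ht
  have hEt : E t ≤ E 0 := hmono Set.self_mem_Ici ht ht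
  have hE0 : E 0 = 2 * ε ^ 2 * lam ^ 2 := by
    simp [hE, hv, hw, h0, h0']
    ring
  have hwt : (w t) ^ 2 ≤ 2 := by
    have h1 : ε ^ 2 * lam ^ 2 * (w t) ^ 2 ≤ 2 * ε ^ 2 * lam ^ 2 := by
      have h3 := hEt
      rw [hE0] at h3
      simp only [hE] at h3
      nlinarith [mul_nonneg (sq_nonneg ε) (sq_nonneg (v t))]
    have hpos : 0 < ε ^ 2 * lam ^ 2 := by positivity
    nlinarith
  have habs : |w t| ≤ Real.sqrt 2 := by
    rw [← Real.sqrt_sq_eq_abs]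
    exact Real.sqrt_le_sqrt hwt
  have hft : |f t| = |w t| * Real.exp (-(lam * t)) := by
    rw [hw]
    simp [abs_mul, abs_of_pos (Real.exp_pos (lam * t)), ← Real.exp_add]
    rw [mul_assoc, mul_comm (Real.exp (lam * t)), mul_assoc, ← Real.exp_add]
    simp
  rw [hft]
  exact mul_le_mul_of_nonneg_right habs (Real.exp_pos _).le
end

section
/- Fix λ > 0 and ε > 0 with 1 − 4λε² ≥ 0, and let (f,g) solve f' = g/ε, g' = −λ f/ε − g/ε² with f(0) = 0, g(0) = 1. Then for all t ≥ 0, g(t) = e^{−t/ε²} − ∫₀ᵗ (λ/ε) e^{−(t−s)/ε²} f(s) ds, and there is a universal constant C such that |g(t)| ≤ e^{−t/ε²} + C λ ε² e^{−λ t}. -/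
set_option maxHeartbeats 1000000

open intervalIntegral MeasureTheory

theorem stmt12 :
    ∃ C : ℝ, 0 < C ∧ ∀ (lam ε : ℝ) (f g : ℝ → ℝ),
      0 < lam → 0 < ε → 0 ≤ 1 - 4 * lam * ε ^ 2 →
      (∀ t, HasDerivAt f (g t / ε) t) →
      (∀ t, HasDerivAt g (-(lam * f t) / ε - g t / ε ^ 2) t) →
      f 0 = 0 → g 0 = 1 →
      ∀ t, 0 ≤ t →
        (g t = Real.exp (-(t / ε ^ 2)) -
            ∫ s in (0 : ℝ)..t, (lam / ε) * Real.exp (-((t - s) / ε ^ 2)) * f s)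
        ∧ |g t| ≤ Real.exp (-(t / ε ^ 2)) + C * lam * ε ^ 2 * Real.exp (-(lam * t)) := by
  refine ⟨3, by norm_num, ?_⟩
  intro lam ε f g hlam hε hover hf hg hf0 hg0
  have hεne : ε ≠ 0 := ne_of_gt hε
  have hε2 : (0:ℝ) < ε ^ 2 := by positivity
  have hle : lam * ε ^ 2 ≤ 1/4 := by nlinarith
  have hfc : Continuous f := by
    rw [continuous_iff_continuousAt]; exact fun x => (hf x).continuousAt
  have hgc : Continuous g := by
    rw [continuous_iff_continuousAt]; exact fun x => (hg x).continuousAt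
  -- Lyapunov function
  set F : ℝ → ℝ := fun t =>
    (f t * f t + 2*ε*(f t * g t) + 2*ε^2*(g t * g t)) * Real.exp (2*lam*t) with hFdef
  have hF : ∀ x, HasDerivAt F
      (Real.exp (2*lam*x) * (-(2*(1 - 2*lam*ε^2)) * (g x * g x))) x := by
    intro x
    have h1 := (hf x).mul (hf x)
    have h2 := ((hf x).mul (hg x)).const_mul (2*ε)
    have h3 := ((hg x).mul (hg x)).const_mul (2*ε^2)
    have hE := (h1.add h2).add h3
    have hexp : HasDerivAt (fun t : ℝ => Real.exp (2*lam*t))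
        (Real.exp (2*lam*x) * (2*lam*1)) x := ((hasDerivAt_id x).const_mul (2*lam)).exp
    have := hE.mul hexp
    refine this.congr_deriv ?_
    simp only [Pi.add_apply, Pi.mul_apply]
    field_simp
    ring
  have hanti : Antitone F :=
    antitone_of_deriv_nonpos (fun x => (hF x).differentiableAt) (fun x => by
      rw [(hF x).deriv]
      have h1 : (0:ℝ) ≤ 2*(1 - 2*lam*ε^2) := by nlinarith
      have h2 := (Real.exp_pos (2*lam*x)).le
      nlinarith [mul_nonneg h2 (mul_nonneg h1 (mul_self_nonneg (g x)))])
  have hF0 : F 0 = 2*ε^2 := by simp [hFdef, hf0, hg0]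
  -- bound on f
  have fbound : ∀ s : ℝ, 0 ≤ s → |f s| ≤ 2*ε*Real.exp (-(lam*s)) := by
    intro s hs
    have hFs : F s ≤ 2*ε^2 := hF0 ▸ hanti hs
    have hexp1 : Real.exp (-(lam*s)) * Real.exp (-(lam*s)) * Real.exp (2*lam*s) = 1 := by
      rw [← Real.exp_add, ← Real.exp_add, show -(lam*s) + -(lam*s) + 2*lam*s = 0 by ring,
        Real.exp_zero]
    have step1 : f s * f s * Real.exp (2*lam*s) ≤ 4*ε^2 := by
      have hsq : 0 ≤ (f s + 2*ε*g s)^2 := sq_nonneg _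
      have hep := (Real.exp_pos (2*lam*s)).le
      simp only [hFdef] at hFs
      nlinarith [mul_nonneg hsq hep]
    have step2 : f s * f s ≤ (2*ε*Real.exp (-(lam*s)))^2 := by
      calc f s * f s
          = f s * f s * Real.exp (2*lam*s) * (Real.exp (-(lam*s)) * Real.exp (-(lam*s))) := by
            nlinarith [hexp1]
        _ ≤ 4*ε^2 * (Real.exp (-(lam*s)) * Real.exp (-(lam*s))) := by
            have := mul_nonneg (Real.exp_pos (-(lam*s))).le (Real.exp_pos (-(lam*s))).le
            exact mul_le_mul_of_nonneg_right step1 this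
        _ = (2*ε*Real.exp (-(lam*s)))^2 := by ring
    have hB : (0:ℝ) < 2*ε*Real.exp (-(lam*s)) := by positivity
    nlinarith [abs_nonneg (f s), sq_abs (f s), step2]
  intro t ht
  -- Duhamel formula
  have hP : ∀ x : ℝ, HasDerivAt (fun s => ε * Real.exp (s/ε^2) * g s)
      (-lam * Real.exp (x/ε^2) * f x) x := by
    intro x
    have h1 : HasDerivAt (fun s : ℝ => ε * Real.exp (s/ε^2))
        (ε * (Real.exp (x/ε^2) * (1/ε^2))) x := by
      have := (((hasDerivAt_id x).div_const (ε^2)).exp).const_mul ε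
      simpa using this
    have h2 := h1.mul (hg x)
    refine h2.congr_deriv ?_
    field_simp
    ring
  have hInt : IntervalIntegrable (fun s => -lam * Real.exp (s/ε^2) * f s) volume 0 t :=
    (Continuous.mul (by fun_prop) hfc).intervalIntegrable 0 t
  have hFTC := intervalIntegral.integral_eq_sub_of_hasDerivAt (f := fun s => ε * Real.exp (s/ε^2) * g s)
    (fun x _ => hP x) hInt
  have hcong : ∀ s : ℝ, (lam/ε) * Real.exp (-((t-s)/ε^2)) * f s
      = (-(Real.exp (-(t/ε^2)))/ε) * (-lam * Real.exp (s/ε^2) * f s) := by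
    intro s
    rw [show -((t-s)/ε^2) = -(t/ε^2) + s/ε^2 by ring, Real.exp_add]
    ring
  have hIeq : (∫ s in (0:ℝ)..t, (lam/ε) * Real.exp (-((t-s)/ε^2)) * f s)
      = Real.exp (-(t/ε^2)) - g t := by
    rw [intervalIntegral.integral_congr (fun s _ => hcong s),
      intervalIntegral.integral_const_mul, hFTC]
    have : Real.exp (-(t/ε^2)) * Real.exp (t/ε^2) = 1 := by
      rw [← Real.exp_add]; simp
    simp only [hg0, mul_one, zero_div, Real.exp_zero]
    have hee : ε * ε⁻¹ = 1 := mul_inv_cancel₀ hεne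
    linear_combination (-(g t)) * this +
      (Real.exp (-(t/ε^2)) * (1 - Real.exp (t/ε^2) * g t)) * hee
  have hDu : g t = Real.exp (-(t/ε^2)) -
      ∫ s in (0:ℝ)..t, (lam/ε) * Real.exp (-((t-s)/ε^2)) * f s := by
    rw [hIeq]; ring
  refine ⟨hDu, ?_⟩
  -- the bound
  set k : ℝ := 1/ε^2 - lam with hk
  have hkpos : 0 < k := by
    have : k = (1 - lam*ε^2)/ε^2 := by rw [hk]; field_simp
    rw [this]; apply div_pos (by nlinarith) hε2
  have hIbound : |∫ s in (0:ℝ)..t, (lam/ε) * Real.exp (-((t-s)/ε^2)) * f s|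
      ≤ 3*lam*ε^2*Real.exp (-(lam*t)) := by
    have habs := intervalIntegral.abs_integral_le_integral_abs
      (f := fun s => (lam/ε) * Real.exp (-((t-s)/ε^2)) * f s) (μ := volume) ht
    have hcont1 : Continuous (fun s => |(lam/ε) * Real.exp (-((t-s)/ε^2)) * f s|) := by
      apply Continuous.abs; apply Continuous.mul (by fun_prop) hfc
    have hmono : (∫ s in (0:ℝ)..t, |(lam/ε) * Real.exp (-((t-s)/ε^2)) * f s|)
        ≤ ∫ s in (0:ℝ)..t, 2*lam*Real.exp (-(t/ε^2)) * Real.exp (k*s) := by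
      apply intervalIntegral.integral_mono_on ht (hcont1.intervalIntegrable 0 t)
        ((by fun_prop : Continuous fun s => 2*lam*Real.exp (-(t/ε^2)) * Real.exp (k*s)).intervalIntegrable 0 t)
      intro x hx
      have h1 : |(lam/ε) * Real.exp (-((t-x)/ε^2)) * f x|
          = (lam/ε) * Real.exp (-((t-x)/ε^2)) * |f x| := by
        rw [abs_mul, abs_of_pos (by positivity)]
      rw [h1]
      have h2 := fbound x hx.1
      calc (lam/ε) * Real.exp (-((t-x)/ε^2)) * |f x|
          ≤ (lam/ε) * Real.exp (-((t-x)/ε^2)) * (2*ε*Real.exp (-(lam*x))) :=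
            mul_le_mul_of_nonneg_left h2 (by positivity)
        _ = 2*lam*Real.exp (-(t/ε^2)) * Real.exp (k*x) := by
            rw [show -((t-x)/ε^2) = -(t/ε^2) + (x/ε^2) by ring, Real.exp_add,
              show k*x = x/ε^2 + -(lam*x) by rw [hk]; field_simp; ring, Real.exp_add]
            field_simp
    have hA : ∀ x : ℝ, HasDerivAt (fun s => 2*lam*Real.exp (-(t/ε^2)) * (Real.exp (k*s)/k))
        (2*lam*Real.exp (-(t/ε^2)) * Real.exp (k*x)) x := by
      intro x
      have h1 : HasDerivAt (fun s : ℝ => Real.exp (k*s)) (Real.exp (k*x) * (k*1)) x :=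
        ((hasDerivAt_id x).const_mul k).exp
      have := (h1.div_const k).const_mul (2*lam*Real.exp (-(t/ε^2)))
      refine this.congr_deriv ?_
      field_simp
    have hval : (∫ s in (0:ℝ)..t, 2*lam*Real.exp (-(t/ε^2)) * Real.exp (k*s))
        = 2*lam*Real.exp (-(t/ε^2)) * (Real.exp (k*t)/k)
          - 2*lam*Real.exp (-(t/ε^2)) * (Real.exp (k*0)/k) := by
      exact intervalIntegral.integral_eq_sub_of_hasDerivAt (fun x _ => hA x)
        ((by fun_prop : Continuous fun s => 2*lam*Real.exp (-(t/ε^2)) * Real.exp (k*s)).intervalIntegrable 0 t)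
    have hprod : Real.exp (-(t/ε^2)) * Real.exp (k*t) = Real.exp (-(lam*t)) := by
      rw [← Real.exp_add]; congr 1; rw [hk]; field_simp; ring
    have hfinal : 2*lam*Real.exp (-(t/ε^2)) * (Real.exp (k*t)/k)
          - 2*lam*Real.exp (-(t/ε^2)) * (Real.exp (k*0)/k)
        ≤ 3*lam*ε^2*Real.exp (-(lam*t)) := by
      have h1 : 2*lam*Real.exp (-(t/ε^2)) * (Real.exp (k*0)/k) ≥ 0 := by positivity
      have h2 : 2*lam*Real.exp (-(t/ε^2)) * (Real.exp (k*t)/k)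
          = 2*lam*Real.exp (-(lam*t))/k := by
        rw [← hprod]; ring
      have h3 : 2*lam*Real.exp (-(lam*t))/k ≤ 3*lam*ε^2*Real.exp (-(lam*t)) := by
        rw [div_le_iff₀ hkpos]
        have h4 : 3*lam*ε^2*Real.exp (-(lam*t))*k
            = 3*lam*Real.exp (-(lam*t))*(1-lam*ε^2) := by rw [hk]; field_simp
        rw [h4]
        nlinarith [mul_pos hlam (Real.exp_pos (-(lam*t))), hle]
      linarith
    calc |∫ s in (0:ℝ)..t, (lam/ε) * Real.exp (-((t-s)/ε^2)) * f s|
        ≤ ∫ s in (0:ℝ)..t, |(lam/ε) * Real.exp (-((t-s)/ε^2)) * f s| := habs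
      _ ≤ ∫ s in (0:ℝ)..t, 2*lam*Real.exp (-(t/ε^2)) * Real.exp (k*s) := hmono
      _ = _ := hval
      _ ≤ 3*lam*ε^2*Real.exp (-(lam*t)) := hfinal
  have := abs_add_le (Real.exp (-(t/ε^2)))
    (-(∫ s in (0:ℝ)..t, (lam/ε) * Real.exp (-((t-s)/ε^2)) * f s))
  calc |g t| = |Real.exp (-(t/ε^2)) +
        -(∫ s in (0:ℝ)..t, (lam/ε) * Real.exp (-((t-s)/ε^2)) * f s)| := by
        rw [hDu, sub_eq_add_neg]
    _ ≤ |Real.exp (-(t/ε^2))| +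
        |-(∫ s in (0:ℝ)..t, (lam/ε) * Real.exp (-((t-s)/ε^2)) * f s)| := this
    _ ≤ Real.exp (-(t/ε^2)) + 3*lam*ε^2*Real.exp (-(lam*t)) := by
        rw [abs_of_pos (Real.exp_pos _), abs_neg]
        linarith [hIbound]
    _ = Real.exp (-(t/ε^2)) + 3*lam*ε^2*Real.exp (-(lam*t)) := rfl
end

section
/- For all α ∈ [0,1] and δ ∈ [0, α/2], there exists C ∈ (0,∞) such that: for all λ > 0, ε ∈ (0,1), t > 0, if f solves ε² f'' + f' + λ f = 0 with f(0) = 1, f'(0) = 0, then λ^{δ − α/2} |f(t) − e^{−λ t}| ≤ C t^{−δ} ε^{α}. -/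
lemma aux_xp (x p : ℝ) (hx : 0 < x) (hp0 : 0 ≤ p) (hp1 : p ≤ 1) :
    x ^ p * Real.exp (-x) ≤ 1 := by
  have h1 : x ^ p ≤ 1 + x := by
    rcases le_total x 1 with h | h
    · have : x ^ p ≤ 1 := Real.rpow_le_one hx.le h hp0
      linarith
    · have : x ^ p ≤ x ^ (1:ℝ) := Real.rpow_le_rpow_of_exponent_le h hp1
      rw [Real.rpow_one] at this
      linarith
  have h2 : (1 + x) * Real.exp (-x) ≤ 1 := by
    rw [Real.exp_neg]
    rw [mul_inv_le_iff₀ (Real.exp_pos x)]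
    have := Real.add_one_le_exp x
    linarith
  calc x ^ p * Real.exp (-x) ≤ (1 + x) * Real.exp (-x) :=
        mul_le_mul_of_nonneg_right h1 (Real.exp_nonneg _)
    _ ≤ 1 := h2

lemma exp_le_rpow_aux (x p : ℝ) (hx : 0 < x) (hp0 : 0 ≤ p) (hp1 : p ≤ 1) :
    Real.exp (-x) ≤ x ^ (-p) := by
  have h := aux_xp x p hx hp0 hp1
  have hxp : (0:ℝ) < x ^ p := Real.rpow_pos_of_pos hx p
  rw [Real.rpow_neg hx.le]
  rw [inv_eq_one_div, le_div_iff₀ hxp]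
  linarith [h, mul_comm (x ^ p) (Real.exp (-x))]

lemma decay_le {g g' : ℝ → ℝ} (hg : ∀ s, HasDerivAt g (g' s) s)
    (h : ∀ s, g' s ≤ 0) {a b : ℝ} (hab : a ≤ b) : g b ≤ g a :=
  antitone_of_hasDerivAt_nonpos hg h hab

lemma regime1 {lam ε : ℝ} {f f' f'' : ℝ → ℝ} (hlam : 0 < lam) (hε : 0 < ε)
    (hreg : 1 ≤ 4 * lam * ε ^ 2)
    (hf : ∀ s, HasDerivAt f (f' s) s) (hf' : ∀ s, HasDerivAt f' (f'' s) s)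
    (hode : ∀ s, ε ^ 2 * f'' s + f' s + lam * f s = 0)
    (hf0 : f 0 = 1) (hf'0 : f' 0 = 0) {t : ℝ} (ht : 0 ≤ t) :
    (f t) ^ 2 ≤ 2 * Real.exp (-(t / (4 * ε ^ 2))) := by
  have hε2 : (0:ℝ) < ε ^ 2 := by positivity
  set E : ℝ → ℝ := fun s => ε ^ 2 * (f' s * f' s) + lam * (f s * f s) + (1/2) * (f s * f' s)
    with hE_def
  set E' : ℝ → ℝ := fun s =>
      2 * ε ^ 2 * (f' s * f'' s) + 2 * lam * (f s * f' s) + (1/2) * (f' s * f' s + f s * f'' s)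
    with hE'_def
  have hE : ∀ s, HasDerivAt E (E' s) s := by
    intro s
    have h := ((((hf' s).mul (hf' s)).const_mul (ε ^ 2)).add
      (((hf s).mul (hf s)).const_mul lam)).add (((hf s).mul (hf' s)).const_mul (1/2))
    refine h.congr_deriv ?_
    simp only [hE'_def]; ring
  set G : ℝ → ℝ := fun s => E s * Real.exp (s / (4 * ε ^ 2)) with hG_def
  set G' : ℝ → ℝ := fun s =>
      E' s * Real.exp (s / (4 * ε ^ 2)) + E s * (Real.exp (s / (4 * ε ^ 2)) * (1 / (4 * ε ^ 2)))
    with hG'_def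
  have hG : ∀ s, HasDerivAt G (G' s) s := by
    intro s
    have hexp : HasDerivAt (fun s : ℝ => Real.exp (s / (4 * ε ^ 2)))
        (Real.exp (s / (4 * ε ^ 2)) * (1 / (4 * ε ^ 2))) s := by
      exact ((hasDerivAt_id s).div_const (4 * ε ^ 2)).exp
    exact (hE s).mul hexp
  have hG'neg : ∀ s, G' s ≤ 0 := by
    intro s
    have hm := hode s
    have key2 : (4 * ε ^ 2) * ((4 * ε ^ 2) * E' s + E s) ≤ 0 := by
      have h1 : (4 * ε ^ 2) * E' s + E s =
          -5 * ε ^ 2 * (f' s) ^ 2 - lam * (f s) ^ 2 - (3/2) * (f s * f' s) := by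
        simp only [hE'_def, hE_def]
        linear_combination (8 * ε ^ 2 * f' s + 2 * f s) * hm
      rw [h1]
      nlinarith [sq_nonneg (f s + 3 * ε ^ 2 * f' s),
        mul_nonneg (sub_nonneg.2 hreg) (sq_nonneg (f s)), sq_nonneg (ε ^ 2 * f' s),
        sq_nonneg (ε * f' s), sq_nonneg (f s)]
    have key : E' s + E s * (1 / (4 * ε ^ 2)) ≤ 0 := by
      have h4 : (0:ℝ) < 4 * ε ^ 2 := by positivity
      have h5 : (4 * ε ^ 2) * E' s + E s ≤ 0 := by nlinarith [key2, h4]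
      have heq : E' s + E s * (1 / (4 * ε ^ 2)) = ((4 * ε ^ 2) * E' s + E s) / (4 * ε ^ 2) := by
        field_simp
      rw [heq]
      exact div_nonpos_of_nonpos_of_nonneg h5 h4.le
    simp only [hG'_def]
    have hexp_pos : (0:ℝ) < Real.exp (s / (4 * ε ^ 2)) := Real.exp_pos _
    calc E' s * Real.exp (s / (4 * ε ^ 2)) + E s * (Real.exp (s / (4 * ε ^ 2)) * (1 / (4 * ε ^ 2)))
        = (E' s + E s * (1 / (4 * ε ^ 2))) * Real.exp (s / (4 * ε ^ 2)) := by ring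
      _ ≤ 0 := mul_nonpos_of_nonpos_of_nonneg key hexp_pos.le
  have hmono : G t ≤ G 0 := antitone_of_hasDerivAt_nonpos hG hG'neg ht
  have hG0 : G 0 = lam := by
    simp only [hG_def, hE_def, hf0, hf'0]
    norm_num
  have hEt : lam / 2 * (f t) ^ 2 ≤ E t := by
    simp only [hE_def]
    nlinarith [sq_nonneg (2 * ε ^ 2 * f' t + f t), sq_nonneg (ε * f' t),
      mul_nonneg (sub_nonneg.2 hreg) (sq_nonneg (f t)), sq_nonneg (ε ^ 2 * f' t)]
  set x := t / (4 * ε ^ 2) with hx_def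
  have hexp_pos : (0:ℝ) < Real.exp x := Real.exp_pos _
  have h6 : lam / 2 * (f t) ^ 2 * Real.exp x ≤ lam := by
    calc lam / 2 * (f t) ^ 2 * Real.exp x ≤ E t * Real.exp x :=
          mul_le_mul_of_nonneg_right hEt hexp_pos.le
      _ = G t := rfl
      _ ≤ G 0 := hmono
      _ = lam := hG0
  have h7 : (f t) ^ 2 * Real.exp x ≤ 2 := by nlinarith
  rw [Real.exp_neg]
  rw [show (2:ℝ) * (Real.exp x)⁻¹ = 2 / Real.exp x by ring]
  rw [le_div_iff₀ hexp_pos]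
  exact h7

lemma aux2 {ε lam t : ℝ} {u u1 u2 : ℝ → ℝ} (hlam : 0 < lam) (hε : 0 < ε)
    (hreg : 4 * lam * ε ^ 2 ≤ 1)
    (hu : ∀ s, HasDerivAt u (u1 s) s) (hu1 : ∀ s, HasDerivAt u1 (u2 s) s)
    (hode : ∀ s, ε ^ 2 * u2 s + (1 - 2 * lam * ε ^ 2) * u1 s + lam ^ 2 * ε ^ 2 * u s = 0)
    (h0 : u 0 = 1) (h1 : u1 0 = lam) (ht : 0 < t) :
    |u t - 1| ≤ Real.sqrt 2 * (lam * ε * Real.sqrt t) := by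
  have hε2 : (0:ℝ) < ε ^ 2 := by positivity
  have hμ : (1:ℝ)/2 ≤ 1 - 2 * lam * ε ^ 2 := by nlinarith
  have hcont1 : Continuous u1 := by
    rw [continuous_iff_continuousAt]; exact fun s => (hu1 s).continuousAt
  set Q : ℝ → ℝ := fun s => ε ^ 2 * (u1 s * u1 s) + lam ^ 2 * ε ^ 2 * (u s * u s) with hQ_def
  have hQ : ∀ s, HasDerivAt Q (-(2 * (1 - 2 * lam * ε ^ 2)) * (u1 s) ^ 2) s := by
    intro s
    have h := (((hu1 s).mul (hu1 s)).const_mul (ε ^ 2)).add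
      (((hu s).mul (hu s)).const_mul (lam ^ 2 * ε ^ 2))
    refine h.congr_deriv ?_
    linear_combination (2 * u1 s) * hode s
  -- FTC: integral of Q' equals Q t - Q 0
  have hQint : IntervalIntegrable (fun s => -(2 * (1 - 2 * lam * ε ^ 2)) * (u1 s) ^ 2)
      MeasureTheory.volume 0 t := (continuous_const.mul (hcont1.pow 2)).intervalIntegrable 0 t
  have hfund : ∫ s in (0:ℝ)..t, (-(2 * (1 - 2 * lam * ε ^ 2)) * (u1 s) ^ 2) = Q t - Q 0 :=
    intervalIntegral.integral_eq_sub_of_hasDerivAt (fun s _ => hQ s) hQint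
  set I : ℝ := ∫ s in (0:ℝ)..t, (u1 s) ^ 2 with hI_def
  have hpull : ∫ s in (0:ℝ)..t, (-(2 * (1 - 2 * lam * ε ^ 2)) * (u1 s) ^ 2)
      = -(2 * (1 - 2 * lam * ε ^ 2)) * I := intervalIntegral.integral_const_mul _ _
  have hQt : 0 ≤ Q t := by
    simp only [hQ_def]
    have a1 : 0 ≤ ε ^ 2 * (u1 t * u1 t) := mul_nonneg hε2.le (mul_self_nonneg _)
    have a2 : 0 ≤ lam ^ 2 * ε ^ 2 * (u t * u t) :=
      mul_nonneg (mul_nonneg (sq_nonneg lam) hε2.le) (mul_self_nonneg _)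
    linarith
  have hQ0 : Q 0 = 2 * lam ^ 2 * ε ^ 2 := by simp only [hQ_def, h0, h1]; ring
  have hI_nonneg : 0 ≤ I := by
    apply intervalIntegral.integral_nonneg ht.le
    intro s _; positivity
  have hI_le : I ≤ 2 * lam ^ 2 * ε ^ 2 := by
    have h2 : 2 * (1 - 2 * lam * ε ^ 2) * I = Q 0 - Q t := by
      linarith [hfund, hpull]
    nlinarith [hQt, hμ, hI_nonneg]
  -- u t - 1 = ∫ u1
  have hut : u t - 1 = ∫ s in (0:ℝ)..t, u1 s := by
    rw [intervalIntegral.integral_eq_sub_of_hasDerivAt (fun s _ => hu s)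
      (hcont1.intervalIntegrable 0 t), h0]
  set c : ℝ := Real.sqrt 2 * lam * ε / Real.sqrt t with hc_def
  have hst : (0:ℝ) < Real.sqrt t := Real.sqrt_pos.2 ht
  have hs2 : (0:ℝ) < Real.sqrt 2 := Real.sqrt_pos.2 (by norm_num)
  have hc0 : 0 < c := by positivity
  have hptw : ∀ s ∈ Set.Icc (0:ℝ) t, |u1 s| ≤ ((u1 s) ^ 2 + c ^ 2) / (2 * c) := by
    intro s _
    rw [le_div_iff₀ (by positivity)]
    nlinarith [sq_nonneg (|u1 s| - c), sq_abs (u1 s), abs_nonneg (u1 s)]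
  have hint2 : IntervalIntegrable (fun s => ((u1 s) ^ 2 + c ^ 2) / (2 * c))
      MeasureTheory.volume 0 t :=
    (((hcont1.pow 2).add continuous_const).div_const _).intervalIntegrable 0 t
  have habs : |u t - 1| ≤ (I + c ^ 2 * t) / (2 * c) := by
    rw [hut]
    calc |∫ s in (0:ℝ)..t, u1 s| ≤ ∫ s in (0:ℝ)..t, |u1 s| :=
          intervalIntegral.abs_integral_le_integral_abs ht.le
      _ ≤ ∫ s in (0:ℝ)..t, ((u1 s) ^ 2 + c ^ 2) / (2 * c) := by
          apply intervalIntegral.integral_mono_on ht.le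
            (hcont1.abs.intervalIntegrable 0 t) hint2 hptw
      _ = (I + c ^ 2 * t) / (2 * c) := by
          rw [intervalIntegral.integral_div]
          congr 1
          rw [intervalIntegral.integral_add (f := fun s => u1 s ^ 2) ((hcont1.pow 2).intervalIntegrable 0 t)
            (intervalIntegrable_const)]
          simp [hI_def, mul_comm]
  have hc2t : c ^ 2 * t = 2 * lam ^ 2 * ε ^ 2 := by
    rw [hc_def, div_pow, Real.sq_sqrt ht.le, div_mul_cancel₀ _ ht.ne', mul_pow, mul_pow,
      Real.sq_sqrt (by norm_num : (0:ℝ) ≤ 2)]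
  have hfin : (I + c ^ 2 * t) / (2 * c) ≤ Real.sqrt 2 * (lam * ε * Real.sqrt t) := by
    have hnum : I + c ^ 2 * t ≤ 4 * lam ^ 2 * ε ^ 2 := by rw [hc2t]; linarith
    have h2 : Real.sqrt 2 * Real.sqrt 2 = 2 := Real.mul_self_sqrt (by norm_num)
    have heq : (4 * lam ^ 2 * ε ^ 2) / (2 * c) = Real.sqrt 2 * (lam * ε * Real.sqrt t) := by
      rw [hc_def, div_eq_iff (by positivity)]
      field_simp
      linear_combination (-2) * h2
    calc (I + c ^ 2 * t) / (2 * c) ≤ (4 * lam ^ 2 * ε ^ 2) / (2 * c) :=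
          (div_le_div_iff_of_pos_right (by positivity)).2 hnum
      _ = Real.sqrt 2 * (lam * ε * Real.sqrt t) := heq
  exact habs.trans hfin

lemma regime2 {lam ε : ℝ} {f f' f'' : ℝ → ℝ} (hlam : 0 < lam) (hε : 0 < ε)
    (hreg : 4 * lam * ε ^ 2 ≤ 1)
    (hf : ∀ s, HasDerivAt f (f' s) s) (hf' : ∀ s, HasDerivAt f' (f'' s) s)
    (hode : ∀ s, ε ^ 2 * f'' s + f' s + lam * f s = 0)
    (hf0 : f 0 = 1) (hf'0 : f' 0 = 0) {t : ℝ} (ht : 0 < t) :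
    |f t - Real.exp (-(lam * t))| ≤
      Real.sqrt 2 * (lam * ε * Real.sqrt t) * Real.exp (-(lam * t)) := by
  have hexp : ∀ s : ℝ, HasDerivAt (fun s : ℝ => Real.exp (lam * s))
      (Real.exp (lam * s) * lam) s := by
    intro s
    simpa using ((hasDerivAt_id s).const_mul lam).exp
  have hu : ∀ s, HasDerivAt (fun s => Real.exp (lam * s) * f s)
      (Real.exp (lam * s) * (f' s + lam * f s)) s := by
    intro s
    have h := (hexp s).mul (hf s)
    refine h.congr_deriv ?_
    ring
  have hu1 : ∀ s, HasDerivAt (fun s => Real.exp (lam * s) * (f' s + lam * f s))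
      (Real.exp (lam * s) * (f'' s + 2 * lam * f' s + lam ^ 2 * f s)) s := by
    intro s
    have h := (hexp s).mul ((hf' s).add ((hf s).const_mul lam))
    refine h.congr_deriv ?_
    simp only [Pi.add_apply]; ring
  have hode2 : ∀ s, ε ^ 2 * (Real.exp (lam * s) * (f'' s + 2 * lam * f' s + lam ^ 2 * f s))
      + (1 - 2 * lam * ε ^ 2) * (Real.exp (lam * s) * (f' s + lam * f s))
      + lam ^ 2 * ε ^ 2 * (Real.exp (lam * s) * f s) = 0 := by
    intro s
    linear_combination Real.exp (lam * s) * hode s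
  have h0 : Real.exp (lam * 0) * f 0 = 1 := by simp [hf0]
  have h1 : Real.exp (lam * 0) * (f' 0 + lam * f 0) = lam := by simp [hf0, hf'0]
  have key := aux2 hlam hε hreg hu hu1 hode2 h0 h1 ht
  have hrw : f t - Real.exp (-(lam * t)) =
      Real.exp (-(lam * t)) * (Real.exp (lam * t) * f t - 1) := by
    have he : Real.exp (-(lam * t)) * Real.exp (lam * t) = 1 := by
      rw [← Real.exp_add]; simp
    linear_combination (-(f t)) * he
  rw [hrw, abs_mul, abs_of_pos (Real.exp_pos _), mul_comm]
  exact mul_le_mul_of_nonneg_right key (Real.exp_pos _).le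

section
variable {lam ε : ℝ} {f f' f'' : ℝ → ℝ}

set_option maxHeartbeats 1000000 in
theorem stmt14 (α δ : ℝ) (hα : α ∈ Set.Icc (0 : ℝ) 1) (hδ : δ ∈ Set.Icc (0 : ℝ) (α / 2)) :
    ∃ C : ℝ, 0 < C ∧ ∀ (lam ε t : ℝ) (f f' f'' : ℝ → ℝ),
      0 < lam → ε ∈ Set.Ioo (0 : ℝ) 1 → 0 < t →
      (∀ s, HasDerivAt f (f' s) s) → (∀ s, HasDerivAt f' (f'' s) s) →
      (∀ s, ε ^ 2 * f'' s + f' s + lam * f s = 0) →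
      f 0 = 1 → f' 0 = 0 →
      lam ^ (δ - α / 2) * |f t - Real.exp (-(lam * t))| ≤ C * t ^ (-δ) * ε ^ α := by
  obtain ⟨hα0, hα1⟩ := hα
  obtain ⟨hδ0, hδ2⟩ := hδ
  have hδh : δ ≤ 1/2 := by linarith
  refine ⟨100, by norm_num, ?_⟩
  intro lam ε t f f' f'' hlam hεI ht hf hf' hode hf0 hf'0
  obtain ⟨hε0, hε1⟩ := hεI
  have htp : (0:ℝ) < t ^ (-δ) := Real.rpow_pos_of_pos ht _
  have hεα : (0:ℝ) < ε ^ α := Real.rpow_pos_of_pos hε0 _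
  have hlp : (0:ℝ) ≤ lam ^ (δ - α/2) := (Real.rpow_pos_of_pos hlam _).le
  by_cases hr : 1 ≤ 4 * lam * ε ^ 2
  · -- regime 1
    have hsq := regime1 hlam hε0 hr hf hf' hode hf0 hf'0 ht.le
    have hR : (0:ℝ) ≤ Real.sqrt 2 * Real.exp (-(t/(8*ε^2))) := by positivity
    have hsq2 : (Real.sqrt 2 * Real.exp (-(t/(8*ε^2))))^2 = 2 * Real.exp (-(t/(4*ε^2))) := by
      rw [mul_pow, Real.sq_sqrt (by norm_num : (0:ℝ) ≤ 2), sq, ← Real.exp_add]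
      congr 2
      field_simp
      ring
    have hft : |f t| ≤ Real.sqrt 2 * Real.exp (-(t/(8*ε^2))) := by
      calc |f t| = Real.sqrt ((f t)^2) := (Real.sqrt_sq_eq_abs _).symm
        _ ≤ Real.sqrt ((Real.sqrt 2 * Real.exp (-(t/(8*ε^2))))^2) :=
            Real.sqrt_le_sqrt (by rw [hsq2]; exact hsq)
        _ = Real.sqrt 2 * Real.exp (-(t/(8*ε^2))) := Real.sqrt_sq hR
    have hexpm : Real.exp (-(lam*t)) ≤ Real.exp (-(t/(8*ε^2))) := by
      apply Real.exp_le_exp.2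
      have h1 : t/(8*ε^2) ≤ lam * t := by
        rw [div_le_iff₀ (by positivity)]
        nlinarith [mul_nonneg ht.le (sub_nonneg.2 hr)]
      linarith
    have hs2le : Real.sqrt 2 ≤ 2 := by
      nlinarith [Real.sq_sqrt (by norm_num : (0:ℝ) ≤ 2), Real.sqrt_nonneg 2]
    have hD : |f t - Real.exp (-(lam*t))| ≤ 3 * Real.exp (-(t/(8*ε^2))) := by
      have he8 : (0:ℝ) ≤ Real.exp (-(t/(8*ε^2))) := (Real.exp_pos _).le
      calc |f t - Real.exp (-(lam*t))| ≤ |f t| + |Real.exp (-(lam*t))| := abs_sub _ _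
        _ = |f t| + Real.exp (-(lam*t)) := by rw [abs_of_pos (Real.exp_pos _)]
        _ ≤ Real.sqrt 2 * Real.exp (-(t/(8*ε^2))) + Real.exp (-(t/(8*ε^2))) := by
            apply add_le_add hft hexpm
        _ ≤ 3 * Real.exp (-(t/(8*ε^2))) := by nlinarith
    -- lam power bound
    have hp1 : lam ^ (δ - α/2) ≤ 2 * ε ^ (α - 2*δ) := by
      have hinv : lam⁻¹ ≤ 4 * ε^2 := by
        rw [inv_eq_one_div, div_le_iff₀ hlam]
        nlinarith
      have e1 : lam ^ (δ - α/2) = (lam⁻¹) ^ (α/2 - δ) := by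
        rw [Real.inv_rpow hlam.le, ← Real.rpow_neg hlam.le]
        congr 1; ring
      have e2 : (lam⁻¹) ^ (α/2 - δ) ≤ (4*ε^2) ^ (α/2 - δ) :=
        Real.rpow_le_rpow (inv_nonneg.2 hlam.le) hinv (by linarith)
      have e3 : ((4*ε^2:ℝ)) ^ (α/2 - δ) = (4:ℝ) ^ (α/2-δ) * (ε^2:ℝ) ^ (α/2-δ) :=
        Real.mul_rpow (by norm_num) (by positivity)
      have e4 : (4:ℝ) ^ (α/2-δ) ≤ (4:ℝ) ^ ((1:ℝ)/2) :=
        Real.rpow_le_rpow_of_exponent_le (by norm_num) (by linarith)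
      have e5 : (4:ℝ) ^ ((1:ℝ)/2) = 2 := by
        rw [show (4:ℝ) = 2^(2:ℕ) by norm_num, ← Real.rpow_natCast 2 2,
          ← Real.rpow_mul (by norm_num)]
        norm_num
      have e6 : ((ε^2:ℝ)) ^ (α/2-δ) = ε ^ (α - 2*δ) := by
        rw [← Real.rpow_natCast ε 2, ← Real.rpow_mul hε0.le]
        congr 1; push_cast; ring
      have e7 : (0:ℝ) ≤ (ε^2:ℝ) ^ (α/2-δ) := Real.rpow_nonneg (by positivity) _
      calc lam ^ (δ - α/2) = (lam⁻¹) ^ (α/2 - δ) := e1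
        _ ≤ (4*ε^2) ^ (α/2 - δ) := e2
        _ = (4:ℝ) ^ (α/2-δ) * (ε^2:ℝ) ^ (α/2-δ) := e3
        _ ≤ 2 * (ε^2:ℝ) ^ (α/2-δ) := by
            exact mul_le_mul_of_nonneg_right (le_of_le_of_eq e4 e5) e7
        _ = 2 * ε ^ (α - 2*δ) := by rw [e6]
    have hx : (0:ℝ) < t/(8*ε^2) := by positivity
    have hp2 : Real.exp (-(t/(8*ε^2))) ≤ 3 * (ε ^ (2*δ) * t ^ (-δ)) := by
      have h := exp_le_rpow_aux (t/(8*ε^2)) δ hx hδ0 (by linarith)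
      have e7 : (t/(8*ε^2)) ^ (-δ) = t^(-δ) * ((8*ε^2:ℝ))^δ := by
        rw [Real.rpow_neg hx.le, Real.div_rpow ht.le (by positivity), inv_div,
          Real.rpow_neg ht.le]
        ring
      have e8 : ((8*ε^2:ℝ))^δ = (8:ℝ)^δ * ε^(2*δ) := by
        rw [Real.mul_rpow (by norm_num) (by positivity), ← Real.rpow_natCast ε 2,
          ← Real.rpow_mul hε0.le]
        norm_num
      have e9 : (8:ℝ)^δ ≤ 3 := by
        have ha : (8:ℝ)^δ ≤ (8:ℝ)^((1:ℝ)/2) :=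
          Real.rpow_le_rpow_of_exponent_le (by norm_num) hδh
        have hb : ((8:ℝ)^((1:ℝ)/2))^2 = 8 := by
          rw [← Real.rpow_natCast ((8:ℝ)^((1:ℝ)/2)) 2, ← Real.rpow_mul (by norm_num)]
          norm_num
        nlinarith [Real.rpow_nonneg (by norm_num : (0:ℝ) ≤ 8) ((1:ℝ)/2)]
      have e10 : (0:ℝ) ≤ ε ^ (2*δ) := (Real.rpow_pos_of_pos hε0 _).le
      calc Real.exp (-(t/(8*ε^2))) ≤ (t/(8*ε^2)) ^ (-δ) := h
        _ = t^(-δ) * ((8:ℝ)^δ * ε^(2*δ)) := by rw [e7, e8]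
        _ ≤ t^(-δ) * (3 * ε^(2*δ)) := by
            apply mul_le_mul_of_nonneg_left _ htp.le
            exact mul_le_mul_of_nonneg_right e9 e10
        _ = 3 * (ε ^ (2*δ) * t ^ (-δ)) := by ring
    have hεmul : ε ^ (α - 2*δ) * ε ^ (2*δ) = ε ^ α := by
      rw [← Real.rpow_add hε0]; congr 1; ring
    calc lam ^ (δ - α/2) * |f t - Real.exp (-(lam * t))|
        ≤ (2 * ε ^ (α - 2*δ)) * (3 * Real.exp (-(t/(8*ε^2)))) := by
          apply mul_le_mul hp1 hD (abs_nonneg _) (by positivity)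
      _ ≤ (2 * ε ^ (α - 2*δ)) * (3 * (3 * (ε ^ (2*δ) * t ^ (-δ)))) := by
          apply mul_le_mul_of_nonneg_left _ (by positivity)
          apply mul_le_mul_of_nonneg_left hp2 (by norm_num)
      _ = 18 * (ε ^ (α - 2*δ) * ε ^ (2*δ)) * t ^ (-δ) := by ring
      _ = 18 * ε ^ α * t ^ (-δ) := by rw [hεmul]
      _ ≤ 100 * t ^ (-δ) * ε ^ α := by nlinarith
  · -- regime 2
    push_neg at hr
    have hreg : 4 * lam * ε ^ 2 ≤ 1 := hr.le
    have hD := regime2 hlam hε0 hreg hf hf' hode hf0 hf'0 ht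
    have hA : lam ^ (δ - α/2) * lam = lam ^ (1 + δ - α/2) := by
      rw [← Real.rpow_add_one hlam.ne' (δ - α/2)]
      congr 1; ring
    have hB : lam ^ (1 + δ - α/2) = lam ^ ((1-α)/2) * lam ^ ((1:ℝ)/2 + δ) := by
      rw [← Real.rpow_add hlam]; congr 1; ring
    have hC : Real.sqrt t = t ^ ((1:ℝ)/2 + δ) * t ^ (-δ) := by
      rw [Real.sqrt_eq_rpow, ← Real.rpow_add ht]
      congr 1; ring
    have hE : lam ^ ((1:ℝ)/2 + δ) * t ^ ((1:ℝ)/2 + δ) = (lam*t) ^ ((1:ℝ)/2 + δ) :=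
      (Real.mul_rpow hlam.le ht.le).symm
    have hP2 : (lam*t) ^ ((1:ℝ)/2 + δ) * Real.exp (-(lam*t)) ≤ 1 :=
      aux_xp (lam*t) ((1:ℝ)/2 + δ) (by positivity) (by linarith) (by linarith)
    have hP1 : lam ^ ((1-α)/2) ≤ ε ^ (α-1) := by
      have hle : lam ≤ (ε^2:ℝ)⁻¹ := by
        rw [inv_eq_one_div, le_div_iff₀ (by positivity : (0:ℝ) < ε^2)]
        nlinarith [mul_pos hlam (pow_pos hε0 2)]
      have h1 : lam ^ ((1-α)/2) ≤ ((ε^2:ℝ)⁻¹) ^ ((1-α)/2) :=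
        Real.rpow_le_rpow hlam.le hle (by linarith)
      have h2 : ((ε^2:ℝ)⁻¹) ^ ((1-α)/2) = ε ^ (α-1) := by
        rw [Real.inv_rpow (by positivity), ← Real.rpow_natCast ε 2,
          ← Real.rpow_mul hε0.le, ← Real.rpow_neg hε0.le]
        congr 1; push_cast; ring
      rw [← h2]; exact h1
    have hsplit : lam ^ (δ - α/2) * (Real.sqrt 2 * (lam * ε * Real.sqrt t) * Real.exp (-(lam*t)))
        = Real.sqrt 2 * ε * (lam ^ ((1-α)/2) * ((lam*t) ^ ((1:ℝ)/2 + δ)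
          * Real.exp (-(lam*t)))) * t ^ (-δ) := by
      rw [hC]
      rw [show lam ^ (δ - α/2) * (Real.sqrt 2 * (lam * ε * (t ^ ((1:ℝ)/2 + δ) * t ^ (-δ)))
            * Real.exp (-(lam*t)))
          = Real.sqrt 2 * ε * ((lam ^ (δ - α/2) * lam) * t ^ ((1:ℝ)/2 + δ)
            * Real.exp (-(lam*t))) * t ^ (-δ) by ring, hA, hB]
      rw [show lam ^ ((1-α)/2) * lam ^ ((1:ℝ)/2 + δ) * t ^ ((1:ℝ)/2 + δ) * Real.exp (-(lam*t))
          = lam ^ ((1-α)/2) * ((lam ^ ((1:ℝ)/2 + δ) * t ^ ((1:ℝ)/2 + δ)) * Real.exp (-(lam*t)))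
          by ring, hE]
    have hεmul : ε * ε ^ (α-1) = ε ^ α := by
      rw [mul_comm, ← Real.rpow_add_one hε0.ne' (α-1)]
      congr 1; ring
    have hs2le : Real.sqrt 2 ≤ 2 := by
      nlinarith [Real.sq_sqrt (by norm_num : (0:ℝ) ≤ 2), Real.sqrt_nonneg 2]
    have hεα1 : (0:ℝ) ≤ ε ^ (α-1) := (Real.rpow_pos_of_pos hε0 _).le
    calc lam ^ (δ - α/2) * |f t - Real.exp (-(lam * t))|
        ≤ lam ^ (δ - α/2) * (Real.sqrt 2 * (lam * ε * Real.sqrt t) * Real.exp (-(lam*t))) :=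
          mul_le_mul_of_nonneg_left hD hlp
      _ = Real.sqrt 2 * ε * (lam ^ ((1-α)/2) * ((lam*t) ^ ((1:ℝ)/2 + δ)
            * Real.exp (-(lam*t)))) * t ^ (-δ) := hsplit
      _ ≤ Real.sqrt 2 * ε * (ε ^ (α-1) * 1) * t ^ (-δ) := by
          apply mul_le_mul_of_nonneg_right _ htp.le
          apply mul_le_mul_of_nonneg_left _ (by positivity)
          apply mul_le_mul hP1 hP2 (by positivity) hεα1
      _ = Real.sqrt 2 * (ε * ε ^ (α-1)) * t ^ (-δ) := by ring
      _ = Real.sqrt 2 * ε ^ α * t ^ (-δ) := by rw [hεmul]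
      _ ≤ 100 * t ^ (-δ) * ε ^ α := by nlinarith [hs2le, mul_pos htp hεα, Real.sqrt_nonneg 2]
end
end
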